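/- (Theorem 3) Consider parameters (w, β, γ) with encoded matrices A, W, let x : ℕ → ℝⁿ satisfy x(k+1) = A·x(0) + W·x(k) for all k ∈ ℕ, and fix m ≥ 1 with data matrices P and Q. If P is invertible, then W = Q·P⁻¹; consequently: (i) w_{i,j} = [Q·P⁻¹]_{i,j} for all i ≠ j; (ii) for every i with x_i(0) ≠ 0, γ_i = [Q·P⁻¹]_{i,i} / x_i(0); and (iii) for every i with x_i(0) ≠ 0 and every k ∈ ℕ, β_i = 1 − Σ_{j≠i} [Q·P⁻¹]_{i,j} − (x_i(k+1) − Σ_j [Q·P⁻¹]_{i,j}·x_j(k)) / x_i(0). -/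

import Mathlib

open Matrix

/-- Encoded diagonal matrix A := diag(1 − Σ_{j≠i} w_{i,j} − β_i). -/
noncomputable def encA (n : ℕ) (w : Fin n → Fin n → ℝ) (β : Fin n → ℝ) :
    Matrix (Fin n) (Fin n) ℝ :=
  Matrix.diagonal fun i => 1 - ∑ j ∈ Finset.univ.erase i, w i j - β i

/-- Encoded matrix W with [W]_{i,i} := γ_i·x_i(0) and [W]_{i,j} := w_{i,j} for i ≠ j. -/
def encW (n : ℕ) (x₀ : Fin n → ℝ) (w : Fin n → Fin n → ℝ) (γ : Fin n → ℝ) :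
    Matrix (Fin n) (Fin n) ℝ :=
  Matrix.of fun i j => if i = j then γ i * x₀ i else w i j

/-- Theorem 3: if P is invertible then W = Q·P⁻¹, and the network topology and
the confirmation-bias parameters are exactly inferred from Q·P⁻¹. -/
theorem theorem3 (n m : ℕ) (hn : 1 ≤ n) (hm : 1 ≤ m)
    (w : Fin n → Fin n → ℝ) (β γ : Fin n → ℝ)
    (x : ℕ → Fin n → ℝ)
    (hdyn : ∀ k : ℕ, x (k + 1) =
      (encA n w β).mulVec (x 0) + (encW n (x 0) w γ).mulVec (x k))
    (P Q : Matrix (Fin n) (Fin n) ℝ)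
    (hP : P = ∑ k ∈ Finset.range m,
      Matrix.vecMulVec (x (k + 1) - x k) (x (k + 1) - x k))
    (hQ : Q = ∑ k ∈ Finset.range m,
      Matrix.vecMulVec (x (k + 2) - x (k + 1)) (x (k + 1) - x k))
    (hPinv : IsUnit P) :
    encW n (x 0) w γ = Q * P⁻¹ ∧
      (∀ i j, i ≠ j → w i j = (Q * P⁻¹) i j) ∧
      (∀ i, x 0 i ≠ 0 → γ i = (Q * P⁻¹) i i / x 0 i) ∧
      (∀ i, x 0 i ≠ 0 → ∀ k : ℕ,
        β i = 1 - (∑ j ∈ Finset.univ.erase i, (Q * P⁻¹) i j) -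
          (x (k + 1) i - ∑ j, (Q * P⁻¹) i j * x k j) / x 0 i) := by
  set W := encW n (x 0) w γ with hW
  have hdiff : ∀ k : ℕ, x (k + 2) - x (k + 1) = W.mulVec (x (k + 1) - x k) := by
    intro k
    have h1 := hdyn (k + 1)
    have h2 := hdyn k
    rw [Matrix.mulVec_sub]
    rw [h1, h2]
    abel
  have hQW : Q = W * P := by
    rw [hQ, hP, Finset.mul_sum]
    refine Finset.sum_congr rfl fun k _ => ?_
    rw [hdiff k]
    ext i j
    simp [Matrix.vecMulVec_apply, Matrix.mul_apply, Matrix.mulVec, dotProduct,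
      Finset.sum_mul, mul_assoc]
  have hWQ : W = Q * P⁻¹ := by
    rw [hQW, Matrix.mul_assoc, Matrix.mul_nonsing_inv _ (Matrix.isUnit_iff_isUnit_det P |>.mp hPinv), Matrix.mul_one]
  have hWe : ∀ i j, (Q * P⁻¹) i j = if i = j then γ i * x 0 i else w i j := by
    intro i j; rw [← hWQ]; rfl
  refine ⟨hWQ, ?_, ?_, ?_⟩
  · intro i j hij; rw [hWe i j, if_neg hij]
  · intro i hx0; rw [hWe i i, if_pos rfl, mul_div_assoc, div_self hx0, mul_one]
  · intro i hx0 k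
    have hx := congrFun (hdyn k) i
    have hA : ((encA n w β).mulVec (x 0)) i = (1 - ∑ j ∈ Finset.univ.erase i, w i j - β i) * x 0 i := by
      simp [encA, Matrix.mulVec_diagonal]
    have hWv : (W.mulVec (x k)) i = ∑ j, (Q * P⁻¹) i j * x k j := by
      simp only [Matrix.mulVec, dotProduct]
      exact Finset.sum_congr rfl fun j _ => by rw [← hWQ]
    have hsum : ∀ j ∈ Finset.univ.erase i, (Q * P⁻¹) i j = w i j := by
      intro j hj
      rw [hWe i j, if_neg (Finset.ne_of_mem_erase hj).symm]
    rw [Finset.sum_congr rfl hsum]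
    have hxk : x (k + 1) i = (1 - ∑ j ∈ Finset.univ.erase i, w i j - β i) * x 0 i
        + ∑ j, (Q * P⁻¹) i j * x k j := by
      rw [hx]; simp [hA, hWv]
    rw [hxk]
    field_simp
    ring
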